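/- arXiv:2602.20278 — 6 statements merged into one kernel-verified Lean document; each statement's English description precedes it below -/
import Mathlib

section
/- Let C : {0,1}^n → {0,1}^m be a code with coordinate functions C_1,...,C_m, and fix i ∈ [n] and S ⊆ [m]. Suppose there exists a randomized decoder Dec with perfect completeness for coordinate i (for every message x, Pr[Dec(i, C(x)) = x_i] = 1), and suppose the event R = 'both queries of Dec(i,·) lie in S' has positive probability. Then for every string s ∈ {0,1}^m and every bit b ∈ {0,1}, there exists z ∈ {0,1}^m agreeing with s outside S (z_t = s_t for all t ∉ S) such that Pr[Dec(i, z) = 1 − b | R] = 1. -/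
/-- Let `Dec` be a (possibly adaptive) randomized 2-query decoder
for coordinate `i` of the code `C`, modelled by a finite probability space
`(Ω, w)`, a first query `q1 ω`, a second query `q2 ω b` depending on the first
answer `b`, and an output `out ω b b' ∈ {0,1,⊥}` (`none` plays `⊥`).  Its
output on a received word `y` is `out ω (y (q1 ω)) (y (q2 ω (y (q1 ω))))`.
Assume perfect completeness for coordinate `i` and that the event
`R(y) = "both queries lie in S"` has positive probability (for every word).
Then for every `s ∈ {0,1}^m` and bit `b` there is `z` agreeing with `s`
outside `S` such that, conditioned on `R(z)`, the decoder outputs `1 - b`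
with probability 1. -/
theorem stmt_7 {n m : ℕ} (C : (Fin n → Bool) → Fin m → Bool) (i : Fin n)
    (S : Finset (Fin m))
    {Ω : Type*} [Fintype Ω] [DecidableEq Ω]
    (w : Ω → ℝ) (hw : ∀ ω, 0 ≤ w ω) (hw1 : ∑ ω, w ω = 1)
    (q1 : Ω → Fin m) (q2 : Ω → Bool → Fin m)
    (out : Ω → Bool → Bool → Option Bool)
    (hpc : ∀ (x : Fin n → Bool) (ω : Ω), 0 < w ω →
      out ω (C x (q1 ω)) (C x (q2 ω (C x (q1 ω)))) = some (x i))
    (hR : ∀ y : Fin m → Bool,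
      0 < ∑ ω ∈ Finset.univ.filter
        (fun ω => q1 ω ∈ S ∧ q2 ω (y (q1 ω)) ∈ S), w ω) :
    ∀ (s : Fin m → Bool) (b : Bool), ∃ z : Fin m → Bool,
      (∀ t : Fin m, t ∉ S → z t = s t) ∧
      (∑ ω ∈ Finset.univ.filter (fun ω =>
          (q1 ω ∈ S ∧ q2 ω (z (q1 ω)) ∈ S) ∧
          out ω (z (q1 ω)) (z (q2 ω (z (q1 ω)))) = some (!b)), w ω) /
        (∑ ω ∈ Finset.univ.filter
          (fun ω => q1 ω ∈ S ∧ q2 ω (z (q1 ω)) ∈ S), w ω) = 1 := by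
  intro s b
  set x : Fin n → Bool := fun _ => !b with hx
  refine ⟨fun t => if t ∈ S then C x t else s t, fun t ht => by simp [ht], ?_⟩
  set z : Fin m → Bool := fun t => if t ∈ S then C x t else s t with hz
  have hzS : ∀ t ∈ S, z t = C x t := fun t ht => by simp [hz, ht]
  have key : (∑ ω ∈ Finset.univ.filter (fun ω =>
      (q1 ω ∈ S ∧ q2 ω (z (q1 ω)) ∈ S) ∧
      out ω (z (q1 ω)) (z (q2 ω (z (q1 ω)))) = some (!b)), w ω)
      = ∑ ω ∈ Finset.univ.filter
        (fun ω => q1 ω ∈ S ∧ q2 ω (z (q1 ω)) ∈ S), w ω := by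
    apply Finset.sum_subset
    · intro ω hω
      simp only [Finset.mem_filter, Finset.mem_univ, true_and] at hω ⊢
      exact hω.1
    · intro ω hω hω2
      simp only [Finset.mem_filter, Finset.mem_univ, true_and, not_and] at hω hω2
      by_contra hne
      have hwpos : 0 < w ω := lt_of_le_of_ne (hw ω) (Ne.symm hne)
      apply hω2 hω
      have h1 : z (q1 ω) = C x (q1 ω) := hzS _ hω.1
      have h2 : z (q2 ω (z (q1 ω))) = C x (q2 ω (C x (q1 ω))) := by
        rw [h1]; exact hzS _ (h1 ▸ hω.2)
      rw [h1] at h2 ⊢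
      rw [h2, hpc x ω hwpos]
  rw [key, div_self (ne_of_gt (hR z))]
end

section
/- Let C : {0,1}^n → {0,1}^m be a binary code admitting a non-adaptive 2-query relaxed decoder Dec with perfect completeness and relaxed-decoding parameter (δ, 1/2 + ε): for every i, every x, and every y with Hamming distance HAM(y, C(x)) ≤ δm, Pr[Dec(i,y) ∈ {x_i, ⊥}] ≥ 1/2 + ε. Fix i ∈ [n] and let S_i = { j ∈ [m] : C_j is fixable by x_i }. Assume: (a) |S_i| ≤ δm/2; (b) whenever any decoding function used on a query pair {j,k} can output ⊥, both j, k ∈ S_i; (c) whenever j ∈ S_i, k ∉ S_i and the decoding function never outputs ⊥, the output does not depend on the answer to query k (or C_j ∈ {x_i, ¬x_i}). Then there is a 2-query decoder D_i (sampling Dec's query distribution conditioned on both queries avoiding S_i) such that for every x and every y with HAM(C(x), y) ≤ δm/2, Pr[D_i(y) = x_i] ≥ 1/2 + ε. -/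
/-- Converting a non-adaptive 2-query relaxed decoder with perfect
completeness into a standard local decoder for coordinate `i`.  The decoder is
modelled by a finite probability space `(Ω, w)`, queries `qj ω, qk ω`, and a
decoding function `f ω : {0,1}² → {0,1,⊥}` (`none` plays `⊥`).  `S` is the set
of coordinates fixable by `x_i`.  Under hypotheses (a) `|S| ≤ δm/2`,
(b) any decoding function that can output `⊥` is only used on pairs inside `S`,
(c) for mixed pairs, the `⊥`-free decoding function ignores the answer outside
`S` (or `C_j ∈ {x_i, ¬x_i}`), the decoder `D_i` that samples `Dec(i,·)`'s
queries conditioned on avoiding `S` succeeds: the conditioning event has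
positive probability and for every `y` within distance `δm/2` of `C(x)`, the
conditional probability of outputting `x_i` is at least `1/2 + ε`. -/
theorem stmt_8 {n m : ℕ} (C : (Fin n → Bool) → Fin m → Bool) (i : Fin n)
    (δ ε : ℝ) (hδ : 0 < δ) (hε : 0 < ε)
    {Ω : Type*} [Fintype Ω] [DecidableEq Ω]
    (w : Ω → ℝ) (hw : ∀ ω, 0 ≤ w ω) (hw1 : ∑ ω, w ω = 1)
    (qj qk : Ω → Fin m) (f : Ω → Bool → Bool → Option Bool)
    -- perfect completeness for coordinate i
    (hpc : ∀ (x : Fin n → Bool) (ω : Ω), 0 < w ω →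
      f ω (C x (qj ω)) (C x (qk ω)) = some (x i))
    -- relaxed decoding with parameter (δ, 1/2 + ε)
    (hrel : ∀ (x : Fin n → Bool) (y : Fin m → Bool),
      (hammingDist y (C x) : ℝ) ≤ δ * m →
      1 / 2 + ε ≤ ∑ ω ∈ Finset.univ.filter (fun ω =>
        f ω (y (qj ω)) (y (qk ω)) = some (x i) ∨
        f ω (y (qj ω)) (y (qk ω)) = none), w ω)
    -- S is the set of coordinates fixable by x_i
    (S : Finset (Fin m))
    (hS : ∀ j : Fin m, j ∈ S ↔
      ((∃ c : Bool, ∀ x : Fin n → Bool, x i = false → C x j = c) ∨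
       (∃ c : Bool, ∀ x : Fin n → Bool, x i = true → C x j = c)))
    -- (a)
    (ha : (S.card : ℝ) ≤ δ * m / 2)
    -- (b)
    (hb : ∀ ω : Ω, 0 < w ω → (∃ a a' : Bool, f ω a a' = none) →
      qj ω ∈ S ∧ qk ω ∈ S)
    -- (c)
    (hc : ∀ ω : Ω, 0 < w ω → (∀ a a' : Bool, f ω a a' ≠ none) →
      (qj ω ∈ S → qk ω ∉ S →
        ((∀ a a' a'' : Bool, f ω a a' = f ω a a'') ∨
         (∀ x : Fin n → Bool, C x (qj ω) = x i) ∨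
         (∀ x : Fin n → Bool, C x (qj ω) = !(x i)))) ∧
      (qk ω ∈ S → qj ω ∉ S →
        ((∀ a a' a'' : Bool, f ω a a'' = f ω a' a'') ∨
         (∀ x : Fin n → Bool, C x (qk ω) = x i) ∨
         (∀ x : Fin n → Bool, C x (qk ω) = !(x i))))) :
    -- conclusion: the conditioned decoder D_i is a (2, δ/2, 1/2+ε)-local
    -- decoder for coordinate i
    ∀ (x : Fin n → Bool) (y : Fin m → Bool),
      (hammingDist (C x) y : ℝ) ≤ δ * m / 2 →
      0 < (∑ ω ∈ Finset.univ.filter (fun ω => qj ω ∉ S ∧ qk ω ∉ S), w ω) ∧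
      1 / 2 + ε ≤
        (∑ ω ∈ Finset.univ.filter (fun ω =>
            (qj ω ∉ S ∧ qk ω ∉ S) ∧
            f ω (y (qj ω)) (y (qk ω)) = some (x i)), w ω) /
        (∑ ω ∈ Finset.univ.filter (fun ω => qj ω ∉ S ∧ qk ω ∉ S), w ω) := by

  intro x y hy
  classical
  set x' : Fin n → Bool := Function.update x i (!(x i)) with hx'
  have hx'i : x' i = !(x i) := by simp [hx']
  set y' : Fin m → Bool := fun j => if j ∈ S then C x' j else y j with hy'
  -- non-fixable coordinates achieve every value on each branch of x_i
  have hnonfix : ∀ k : Fin m, k ∉ S → ∀ (b a : Bool), ∃ z : Fin n → Bool,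
      z i = b ∧ C z k = a := by
    intro k hk b a
    rw [hS] at hk
    push_neg at hk
    obtain ⟨h1, h2⟩ := hk
    have hbool : ∀ b a : Bool, b ≠ !a → b = a := by decide
    cases b with
    | false =>
      obtain ⟨z, hz1, hz2⟩ := h1 (!a)
      exact ⟨z, hz1, hbool _ _ hz2⟩
    | true =>
      obtain ⟨z, hz1, hz2⟩ := h2 (!a)
      exact ⟨z, hz1, hbool _ _ hz2⟩
  -- key claim: outside the event E, the corrupted word y' forces output !(x i)
  have hkey : ∀ ω : Ω, 0 < w ω → (qj ω ∈ S ∨ qk ω ∈ S) →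
      f ω (y' (qj ω)) (y' (qk ω)) = some (!(x i)) := by
    intro ω hw0 hcase
    by_cases hj : qj ω ∈ S <;> by_cases hk : qk ω ∈ S
    · have e1 : y' (qj ω) = C x' (qj ω) := if_pos hj
      have e2 : y' (qk ω) = C x' (qk ω) := if_pos hk
      rw [e1, e2, hpc x' ω hw0, hx'i]
    · have hnone : ∀ a a' : Bool, f ω a a' ≠ none := by
        intro a a' hcontra
        exact hk ((hb ω hw0 ⟨a, a', hcontra⟩).2)
      have e2 : y' (qk ω) = y (qk ω) := if_neg hk
      rcases (hc ω hw0 hnone).1 hj hk with h | h | h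
      · have e1 : y' (qj ω) = C x' (qj ω) := if_pos hj
        rw [e1, e2, h _ (y (qk ω)) (C x' (qk ω)), hpc x' ω hw0, hx'i]
      · obtain ⟨z, hz1, hz2⟩ := hnonfix (qk ω) hk (!(x i)) (y (qk ω))
        have e1 : y' (qj ω) = C z (qj ω) := by
          rw [show y' (qj ω) = C x' (qj ω) from if_pos hj, h x', h z, hx'i, hz1]
        rw [e1, e2, ← hz2, hpc z ω hw0, hz1]
      · obtain ⟨z, hz1, hz2⟩ := hnonfix (qk ω) hk (!(x i)) (y (qk ω))
        have e1 : y' (qj ω) = C z (qj ω) := by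
          rw [show y' (qj ω) = C x' (qj ω) from if_pos hj, h x', h z, hx'i, hz1]
        rw [e1, e2, ← hz2, hpc z ω hw0, hz1]
    · have hnone : ∀ a a' : Bool, f ω a a' ≠ none := by
        intro a a' hcontra
        exact hj ((hb ω hw0 ⟨a, a', hcontra⟩).1)
      have e1 : y' (qj ω) = y (qj ω) := if_neg hj
      rcases (hc ω hw0 hnone).2 hk hj with h | h | h
      · have e2 : y' (qk ω) = C x' (qk ω) := if_pos hk
        rw [e1, e2, h (y (qj ω)) (C x' (qj ω)), hpc x' ω hw0, hx'i]
      · obtain ⟨z, hz1, hz2⟩ := hnonfix (qj ω) hj (!(x i)) (y (qj ω))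
        have e2 : y' (qk ω) = C z (qk ω) := by
          rw [show y' (qk ω) = C x' (qk ω) from if_pos hk, h x', h z, hx'i, hz1]
        rw [e1, e2, ← hz2, hpc z ω hw0, hz1]
      · obtain ⟨z, hz1, hz2⟩ := hnonfix (qj ω) hj (!(x i)) (y (qj ω))
        have e2 : y' (qk ω) = C z (qk ω) := by
          rw [show y' (qk ω) = C x' (qk ω) from if_pos hk, h x', h z, hx'i, hz1]
        rw [e1, e2, ← hz2, hpc z ω hw0, hz1]
    · tauto
  -- the corrupted word is still within distance δm of C x
  have hdist : (hammingDist y' (C x) : ℝ) ≤ δ * m := by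
    have hsub : Finset.univ.filter (fun j => y' j ≠ C x j) ⊆
        S ∪ Finset.univ.filter (fun j => C x j ≠ y j) := by
      intro j hj
      simp only [Finset.mem_filter, Finset.mem_union, Finset.mem_univ, true_and] at hj ⊢
      by_cases hjS : j ∈ S
      · exact Or.inl hjS
      · refine Or.inr fun hcon => ?_
        apply hj
        show (if j ∈ S then C x' j else y j) = C x j
        rw [if_neg hjS, hcon]
    have h1 : hammingDist y' (C x) ≤ S.card + hammingDist (C x) y := by
      calc hammingDist y' (C x)
          = (Finset.univ.filter (fun j => y' j ≠ C x j)).card := rfl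
        _ ≤ (S ∪ Finset.univ.filter (fun j => C x j ≠ y j)).card :=
            Finset.card_le_card hsub
        _ ≤ S.card + (Finset.univ.filter fun j => C x j ≠ y j).card :=
            Finset.card_union_le _ _
        _ = S.card + hammingDist (C x) y := rfl
    have h1' : (hammingDist y' (C x) : ℝ) ≤ (S.card : ℝ) + (hammingDist (C x) y : ℝ) := by
      exact_mod_cast h1
    linarith
  have hmain := hrel x y' hdist
  -- abbreviations
  set PE := ∑ ω ∈ Finset.univ.filter (fun ω => qj ω ∉ S ∧ qk ω ∉ S), w ω with hPE
  set SB := ∑ ω ∈ Finset.univ.filter (fun ω => (qj ω ∉ S ∧ qk ω ∉ S) ∧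
      f ω (y (qj ω)) (y (qk ω)) = some (x i)), w ω with hSB
  -- successful outcomes on y' are included (up to null sets) in B
  have hAB : (∑ ω ∈ Finset.univ.filter (fun ω =>
      f ω (y' (qj ω)) (y' (qk ω)) = some (x i) ∨
      f ω (y' (qj ω)) (y' (qk ω)) = none), w ω) ≤ SB := by
    set A := Finset.univ.filter (fun ω =>
      f ω (y' (qj ω)) (y' (qk ω)) = some (x i) ∨
      f ω (y' (qj ω)) (y' (qk ω)) = none) with hA
    have heq : ∑ ω ∈ A.filter (fun ω => 0 < w ω), w ω = ∑ ω ∈ A, w ω := by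
      apply Finset.sum_filter_of_ne
      intro ω _ hne
      exact lt_of_le_of_ne (hw ω) (Ne.symm hne)
    rw [← heq]
    apply Finset.sum_le_sum_of_subset_of_nonneg
    · intro ω hω
      simp only [hA, Finset.mem_filter, Finset.mem_univ, true_and] at hω
      obtain ⟨hAmem, hw0⟩ := hω
      have hE : qj ω ∉ S ∧ qk ω ∉ S := by
        by_contra hcon
        have hcase : qj ω ∈ S ∨ qk ω ∈ S := by tauto
        have := hkey ω hw0 hcase
        rw [this] at hAmem
        rcases hAmem with h | h
        · have : (!(x i)) = x i := by injection h
          simp at this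
        · exact Option.some_ne_none _ h
      have e1 : y' (qj ω) = y (qj ω) := if_neg hE.1
      have e2 : y' (qk ω) = y (qk ω) := if_neg hE.2
      rw [e1, e2] at hAmem
      have hres : f ω (y (qj ω)) (y (qk ω)) = some (x i) := by
        rcases hAmem with h | h
        · exact h
        · exact absurd ((hb ω hw0 ⟨_, _, h⟩).1) hE.1
      simp only [Finset.mem_filter, Finset.mem_univ, true_and]
      exact ⟨hE, hres⟩
    · intro ω _ _
      exact hw ω
  -- B ⊆ E
  have hBE : SB ≤ PE := by
    apply Finset.sum_le_sum_of_subset_of_nonneg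
    · intro ω hω
      simp only [Finset.mem_filter, Finset.mem_univ, true_and] at *
      exact hω.1
    · intro ω _ _
      exact hw ω
  have hPE1 : PE ≤ 1 := by
    rw [← hw1]
    apply Finset.sum_le_sum_of_subset_of_nonneg (Finset.filter_subset _ _)
    intro ω _ _
    exact hw ω
  have hSBlb : 1 / 2 + ε ≤ SB := le_trans hmain hAB
  have hPEpos : 0 < PE := by linarith
  refine ⟨hPEpos, ?_⟩
  rw [le_div_iff₀ hPEpos]
  nlinarith [hSBlb, hPE1, hPEpos, hε]
end

section
/- Let C : {0,1}^n → {0,1}^m be a code, J ⊆ [n], and ρ ∈ {0,1}^{[n]\J}. Define the restricted code C_{J|ρ} on message space {0,1}^J by keeping only those coordinate functions C_j|_{x_{[n]\J}=ρ} that are not constant. Then: (1) C_{J|ρ} maps {0,1}^{|J|} to {0,1}^{m'} with m' ≤ m; (2) if C admits a q-query relaxed decoder with perfect completeness and relaxed decoding parameter (δ, α) with absolute error budget δm, then C_{J|ρ} admits a q-query relaxed decoder with perfect completeness and absolute error budget δm (hence relative error parameter at least δ·m/m' ≥ δ): any decoder for C can be simulated for C_{J|ρ} by answering queries to eliminated (constant)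 coordinates with their constant values. -/
/-- Running a `q`-query adaptive decoder: `qu` maps the history of answers to
the next query, `y` is the received word; the result is the list of answers. -/
def runDec {κ : Type*} (qu : List Bool → κ) (y : κ → Bool) : ℕ → List Bool
  | 0 => []
  | q + 1 => (runDec qu y q) ++ [y (qu (runDec qu y q))]

/-- A `q`-query relaxed decoder with perfect completeness, absolute error
budget `budget`, and success parameter `α`, for the code `C` with message
index type `ι` and codeword index type `κ`.  `none` plays the role of `⊥`. -/
structure RelaxedDecoder {ι κ : Type*} [Fintype ι] [Fintype κ] [DecidableEq κ]
    (C : (ι → Bool) → κ → Bool) (q : ℕ) (budget α : ℝ) where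
  Ω : Type
  fin : Fintype Ω
  w : Ω → ℝ
  w_nonneg : ∀ ω, 0 ≤ w ω
  w_sum : ∑ ω, w ω = 1
  qu : Ω → ι → List Bool → κ
  out : Ω → ι → List Bool → Option Bool
  complete : ∀ (i : ι) (x : ι → Bool) (ω : Ω), 0 < w ω →
    out ω i (runDec (qu ω i) (C x) q) = some (x i)
  relaxed : ∀ (i : ι) (x : ι → Bool) (y : κ → Bool),
    (hammingDist y (C x) : ℝ) ≤ budget →
    α ≤ ∑ ω, (if out ω i (runDec (qu ω i) y q) = some (x i) ∨
                 out ω i (runDec (qu ω i) y q) = none then w ω else 0)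

attribute [instance] RelaxedDecoder.fin

lemma runDec_length {κ : Type*} (qu : List Bool → κ) (y : κ → Bool) (t : ℕ) :
    (runDec qu y t).length = t := by
  induction t with
  | zero => rfl
  | succ t ih => simp [runDec, ih]

lemma runDec_prefix {κ : Type*} (qu : List Bool → κ) (y : κ → Bool) {t t' : ℕ} (h : t ≤ t') :
    runDec qu y t <+: runDec qu y t' := by
  induction t' with
  | zero =>
    have : t = 0 := Nat.le_zero.mp h
    subst this; exact List.prefix_rfl
  | succ t' ih =>
    rcases Nat.lt_or_ge t (t' + 1) with h1 | h2
    · exact (ih (Nat.lt_succ_iff.mp h1)).trans (List.prefix_append _ _)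
    · have : t = t' + 1 := le_antisymm h h2
      subst this; exact List.prefix_rfl

lemma runDec_getD {κ : Type*} (qu : List Bool → κ) (y : κ → Bool) {t t' : ℕ} (h : t < t') :
    (runDec qu y t').getD t false = y (qu (runDec qu y t)) := by
  have hpre : runDec qu y (t + 1) <+: runDec qu y t' := runDec_prefix qu y h
  have hlen : t < (runDec qu y (t + 1)).length := by rw [runDec_length]; omega
  have hlen' : t < (runDec qu y t').length := by rw [runDec_length]; omega
  rw [List.getD_eq_getElem _ _ hlen', ← hpre.getElem hlen]
  show (runDec qu y t ++ [y (qu (runDec qu y t))])[t] = _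
  have hlt : (runDec qu y t).length ≤ t := by rw [runDec_length]
  exact List.getElem_concat_length (runDec_length qu y t).symm _

/-- Replay the original decoder's history from the simulated decoder's history:
`kc j = some c` means coordinate `j` is eliminated with constant value `c`;
`kc j = none` means it is kept and its answer is read off the history. -/
def fixAux {κ : Type*} (f : List Bool → κ) (kc : κ → Option Bool) : ℕ → List Bool → List Bool
  | 0, _ => []
  | t + 1, l =>
    let h := fixAux f kc t l
    h ++ [(kc (f h)).getD (l.getD t false)]

lemma fixAux_run {κ κ' : Type*} (f : List Bool → κ) (kc : κ → Option Bool)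
    (g : κ → κ') (y : κ' → Bool) (y' : κ → Bool)
    (hnone : ∀ j, kc j = none → y (g j) = y' j)
    (hsome : ∀ j c, kc j = some c → c = y' j)
    {t t' : ℕ} (ht : t ≤ t') :
    fixAux f kc t (runDec (fun l => g (f (fixAux f kc l.length l))) y t') =
      runDec f y' t := by
  induction t generalizing t' with
  | zero => rfl
  | succ t ih =>
    have ht1 : t ≤ t' := le_of_lt ht
    show (fixAux f kc t _) ++ _ = _
    rw [ih ht1]
    show runDec f y' t ++ [(kc (f (runDec f y' t))).getD _] = runDec f y' (t + 1)
    show _ = runDec f y' t ++ [y' (f (runDec f y' t))]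
    congr 1
    rcases hkc : kc (f (runDec f y' t)) with _ | c
    · have hgd := runDec_getD (fun l => g (f (fixAux f kc l.length l))) y
        (show t < t' from ht)
      simp only [hkc, Option.getD_none, hgd, runDec_length, ih (le_refl t),
        hnone _ hkc]
    · simp only [hkc, Option.getD_some, hsome _ c hkc]

/-- Restricting a code.  Fix the message bits outside `J` to `ρ`,
and keep only the codeword coordinates whose restricted coordinate functions
are non-constant (the set `Kept`).  Then (1) the restricted code has length
`m' = |Kept| ≤ m`, and (2) if `C` admits a `q`-query relaxed decoder with
perfect completeness and absolute error budget `δm`, so does the restricted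
code (same budget `δm`, hence relative error parameter at least `δ`). -/
theorem stmt_9 {n m : ℕ} (C : (Fin n → Bool) → Fin m → Bool)
    (J : Finset (Fin n)) (ρ : Fin n → Bool)
    (ext : (↥J → Bool) → Fin n → Bool)
    (hext : ∀ (u : ↥J → Bool) (t : Fin n),
      (∀ h : t ∈ J, ext u t = u ⟨t, h⟩) ∧ (t ∉ J → ext u t = ρ t))
    (Kept : Finset (Fin m))
    (hKept : ∀ j : Fin m, j ∈ Kept ↔
      ¬ ∃ c : Bool, ∀ u : ↥J → Bool, C (ext u) j = c)
    (q : ℕ) (δ α : ℝ)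
    (D : RelaxedDecoder C q (δ * m) α) :
    Fintype.card ↥Kept ≤ m ∧
    Nonempty (RelaxedDecoder
      (fun (u : ↥J → Bool) (j : ↥Kept) => C (ext u) j.1) q (δ * m) α) := by
  have hconst : ∀ j : Fin m, j ∉ Kept → ∃ c : Bool, ∀ u : ↥J → Bool, C (ext u) j = c := by
    intro j hj
    by_contra h
    exact hj ((hKept j).mpr h)
  constructor
  · rw [Fintype.card_coe]
    calc Kept.card ≤ (Finset.univ : Finset (Fin m)).card := Finset.card_le_univ Kept
      _ = m := by simp
  by_cases hne : Nonempty ↥Kept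
  · obtain ⟨k₀⟩ := hne
    -- constant values for eliminated coordinates
    set cv : Fin m → Bool := fun j => C (ext fun _ => false) j with hcv
    have hcv_const : ∀ j : Fin m, j ∉ Kept → ∀ u, C (ext u) j = cv j := by
      intro j hj u
      obtain ⟨c, hc⟩ := hconst j hj
      rw [hc u, hcv]
      exact (hc _).symm
    set kc : Fin m → Option Bool := fun j => if j ∈ Kept then none else some (cv j) with hkc
    set g : Fin m → ↥Kept := fun j => if h : j ∈ Kept then ⟨j, h⟩ else k₀ with hg
    set lift : (↥Kept → Bool) → Fin m → Bool :=
      fun y j => if h : j ∈ Kept then y ⟨j, h⟩ else cv j with hlift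
    have hlift_code : ∀ u : ↥J → Bool,
        lift (fun k : ↥Kept => C (ext u) k.1) = C (ext u) := by
      intro u
      funext j
      by_cases h : j ∈ Kept
      · simp [hlift, h]
      · simp [hlift, h, hcv_const j h u]
    have hnone : ∀ (y : ↥Kept → Bool) (j : Fin m), kc j = none → y (g j) = lift y j := by
      intro y j hj
      by_cases h : j ∈ Kept
      · simp [hg, hlift, h]
      · simp [hkc, h] at hj
    have hsome : ∀ (y : ↥Kept → Bool) (j : Fin m) (c : Bool), kc j = some c → c = lift y j := by
      intro y j c hj
      by_cases h : j ∈ Kept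
      · simp [hkc, h] at hj
      · simp [hkc, h] at hj
        simp [hlift, h, hj]
    -- the simulation lemma
    have hrun : ∀ (ω : D.Ω) (i : ↥J) (y : ↥Kept → Bool),
        fixAux (D.qu ω i.1) kc
          (runDec (fun l => g (D.qu ω i.1 (fixAux (D.qu ω i.1) kc l.length l))) y q).length
          (runDec (fun l => g (D.qu ω i.1 (fixAux (D.qu ω i.1) kc l.length l))) y q) =
          runDec (D.qu ω i.1) (lift y) q := by
      intro ω i y
      rw [runDec_length]
      exact fixAux_run (D.qu ω i.1) kc g y (lift y) (hnone y) (hsome y) (le_refl q)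
    have hui : ∀ (u : ↥J → Bool) (i : ↥J), ext u i.1 = u i := by
      intro u i
      rw [(hext u i.1).1 i.2]
    refine ⟨⟨D.Ω, D.fin, D.w, D.w_nonneg, D.w_sum,
      fun ω i l => g (D.qu ω i.1 (fixAux (D.qu ω i.1) kc l.length l)),
      fun ω i l => D.out ω i.1 (fixAux (D.qu ω i.1) kc l.length l),
      ?_, ?_⟩⟩
    · -- completeness
      intro i u ω hw
      have h1 := hrun ω i (fun k : ↥Kept => C (ext u) k.1)
      rw [hlift_code u] at h1
      show D.out ω i.1 _ = _
      rw [h1, D.complete i.1 (ext u) ω hw, hui u i]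
    · -- relaxed decoding
      intro i u y hy
      have hdist : (hammingDist (lift y) (C (ext u)) : ℝ) ≤ δ * m := by
        refine le_trans ?_ hy
        have hcard : hammingDist (lift y) (C (ext u)) ≤
            hammingDist y (fun k : ↥Kept => C (ext u) k.1) := by
          unfold hammingDist
          refine Finset.card_le_card_of_injOn g ?_ ?_
          · intro j hj
            simp only [Finset.coe_filter, Set.mem_setOf_eq, Finset.mem_filter, Finset.mem_univ, true_and] at hj ⊢
            by_cases h : j ∈ Kept
            · simp only [hg, h, dif_pos]
              intro heq
              apply hj
              simp [hlift, h, heq]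
            · exfalso
              apply hj
              simp [hlift, h, hcv_const j h u]
          · intro j₁ hj₁ j₂ hj₂ heq
            simp only [Finset.coe_filter, Set.mem_setOf_eq] at hj₁ hj₂
            have h₁ : j₁ ∈ Kept := by
              by_contra h
              exact hj₁.2 (by simp [hlift, h, hcv_const j₁ h u])
            have h₂ : j₂ ∈ Kept := by
              by_contra h
              exact hj₂.2 (by simp [hlift, h, hcv_const j₂ h u])
            simp only [hg, h₁, h₂, dif_pos] at heq
            exact congrArg Subtype.val heq
        exact_mod_cast hcard
      have := D.relaxed i.1 (ext u) (lift y) hdist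
      refine le_trans this (le_of_eq ?_)
      apply Finset.sum_congr rfl
      intro ω _
      rw [← hrun ω i y, hui u i]
  · -- Kept is empty
    have hKe : ∀ j : Fin m, j ∉ Kept := fun j hj => hne ⟨⟨j, hj⟩⟩
    by_cases hJ : Nonempty ↥J
    · exfalso
      obtain ⟨i⟩ := hJ
      have hω : ∃ ω : D.Ω, 0 < D.w ω := by
        by_contra h
        push_neg at h
        have : ∑ ω, D.w ω = 0 :=
          Finset.sum_eq_zero fun ω _ => le_antisymm (h ω) (D.w_nonneg ω)
        rw [D.w_sum] at this
        norm_num at this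
      obtain ⟨ω, hw⟩ := hω
      set u₀ : ↥J → Bool := fun _ => false
      set u₁ : ↥J → Bool := fun _ => true
      have hCeq : C (ext u₀) = C (ext u₁) := by
        funext j
        obtain ⟨c, hc⟩ := hconst j (hKe j)
        rw [hc u₀, hc u₁]
      have h0 := D.complete i.1 (ext u₀) ω hw
      have h1 := D.complete i.1 (ext u₁) ω hw
      rw [hCeq] at h0
      rw [h0] at h1
      have e0 : ext u₀ i.1 = false := (hext u₀ i.1).1 i.2
      have e1 : ext u₁ i.1 = true := (hext u₁ i.1).1 i.2
      rw [e0, e1] at h1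
      simp at h1
    · have : IsEmpty ↥J := not_nonempty_iff.mp hJ
      exact ⟨⟨D.Ω, D.fin, D.w, D.w_nonneg, D.w_sum,
        fun ω i => isEmptyElim i, fun ω i => isEmptyElim i,
        fun i => isEmptyElim i, fun i => isEmptyElim i⟩⟩
end

section
/- Let Dec be an adaptive 2-query decoder for a code C : {0,1}^n → {0,1}^m with perfect completeness for coordinate i: for every message x, running Dec(i,·) with oracle C(x) outputs x_i with probability 1. Let j ∈ [m] be a possible first query (j in the support of the first-query distribution D_i), and suppose C_j is not fixable by x_i (neither restriction C_j|_{x_i=0} nor C_j|_{x_i=1} is constant). Then for every answer b ∈ {0,1} to the first query, every second query k in the support of D_{i;j,b}, and every answer b' ∈ {0,1}, the decoder's output random variable X_{i;j,b,k,b'} satisfies Pr[X_{i;j,b,k,b'} = ⊥] = 0. -/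
/-- Adaptive 2-query decoder model: first query `j ~ D1`,
answer `b`, second query `k ~ D2 j b`, answer `b'`, output distributed as
`X j b k b'` over `{0,1,⊥}` (`none` plays `⊥`).  Perfect completeness for
coordinate `i`: running the decoder with oracle `C(x)` outputs `x_i` with
probability 1.  If `j₀` is in the support of `D1` and `C_{j₀}` is not fixable
by `x_i`, then for every answer `b`, every `k` in the support of `D2 j₀ b`,
and every answer `b'`, the output is never `⊥`:
`Pr[X_{i;j₀,b,k,b'} = ⊥] = 0`. -/
theorem stmt_10 {n m : ℕ} (C : (Fin n → Bool) → Fin m → Bool) (i : Fin n)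
    (D1 : Fin m → ℝ) (D2 : Fin m → Bool → Fin m → ℝ)
    (X : Fin m → Bool → Fin m → Bool → Option Bool → ℝ)
    (hD1 : ∀ j, 0 ≤ D1 j) (hD2 : ∀ j b k, 0 ≤ D2 j b k)
    (hX : ∀ j b k b' o, 0 ≤ X j b k b' o)
    (hXsum : ∀ j b k b', ∑ o : Option Bool, X j b k b' o = 1)
    -- perfect completeness for coordinate i
    (hpc : ∀ (x : Fin n → Bool) (j : Fin m), 0 < D1 j →
      ∀ k : Fin m, 0 < D2 j (C x j) k →
      ∀ o : Option Bool, 0 < X j (C x j) k (C x k) o → o = some (x i))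
    (j₀ : Fin m) (hj₀ : 0 < D1 j₀)
    -- C_{j₀} is not fixable by x_i
    (hnf : ¬ ((∃ c : Bool, ∀ x : Fin n → Bool, x i = false → C x j₀ = c) ∨
              (∃ c : Bool, ∀ x : Fin n → Bool, x i = true → C x j₀ = c))) :
    ∀ (b : Bool) (k : Fin m), 0 < D2 j₀ b k →
      ∀ b' : Bool, X j₀ b k b' none = 0 := by
  push_neg at hnf
  obtain ⟨h0, h1⟩ := hnf
  intro b k hk b'
  obtain ⟨x0, hx0i, hx0j⟩ := h0 (!b)
  obtain ⟨x1, hx1i, hx1j⟩ := h1 (!b)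
  have hx0j' : C x0 j₀ = b := by cases hb : C x0 j₀ <;> cases b <;> simp_all
  have hx1j' : C x1 j₀ = b := by cases hb : C x1 j₀ <;> cases b <;> simp_all
  have H0 : ∀ o, 0 < X j₀ b k (C x0 k) o → o = some false := by
    intro o ho
    have := hpc x0 j₀ hj₀ k (by rwa [hx0j']) o (by rwa [hx0j'])
    rwa [hx0i] at this
  have H1 : ∀ o, 0 < X j₀ b k (C x1 k) o → o = some true := by
    intro o ho
    have := hpc x1 j₀ hj₀ k (by rwa [hx1j']) o (by rwa [hx1j'])
    rwa [hx1i] at this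
  have hne : C x0 k ≠ C x1 k := by
    intro heq
    have hsum := hXsum j₀ b k (C x0 k)
    have : ∃ o, 0 < X j₀ b k (C x0 k) o := by
      by_contra hall
      push_neg at hall
      have : ∀ o, X j₀ b k (C x0 k) o = 0 := fun o => le_antisymm (hall o) (hX _ _ _ _ _)
      simp [this] at hsum
    obtain ⟨o, ho⟩ := this
    have e0 := H0 o ho
    have e1 := H1 o (by rwa [← heq])
    rw [e0] at e1; simp at e1
  have key : ∀ c : Bool, X j₀ b k c none = 0 := by
    intro c
    rcases Bool.eq_false_or_eq_true (C x0 k) with h | h <;>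
    rcases Bool.eq_false_or_eq_true (C x1 k) with h' | h' <;>
      simp [h, h'] at hne ⊢ <;> cases c
    all_goals refine le_antisymm (not_lt.mp fun hp => ?_) (hX _ _ _ _ _)
    all_goals
      first
      | exact absurd (H0 none (h ▸ hp : 0 < X j₀ b k (C x0 k) none)) (by simp)
      | exact absurd (H1 none (h' ▸ hp : 0 < X j₀ b k (C x1 k) none)) (by simp)
  exact key b'
end

section
/- Let Dec be an adaptive 2-query decoder for C : {0,1}^n → {0,1}^m with perfect completeness for coordinate i, and suppose the restriction C_j|_{x_i=0} is the constant-zero function for some first query j in the support of D_i. Suppose there is a second query k in the support of D_{i;j,0} such that C_k|_{x_i=0} is not constant. Then: (1) Pr[X_{i;j,0,k,0} = 0] = Pr[X_{i;j,0,k,1} = 0] = 1 (the output equals 0 regardless of the second answer), and (2) C_j|_{x_i=1} is the constant-one function, i.e., C_j(x) = x_i for all x. -/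
/-- Adaptive 2-query decoder model as in Claim 3.8: first query
`j ~ D1`, answer `b`, second query `k ~ D2 j b`, answer `b'`, output
distributed as `X j b k b'` over `{0,1,⊥}` (`none` plays `⊥`).  Assume perfect
completeness for coordinate `i`.  Suppose `j₀` is in the support of `D1`,
`C_{j₀}|_{x_i=0} ≡ 0`, and some `k` in the support of `D2 j₀ 0` has
`C_k|_{x_i=0}` non-constant.  Then (1) the output after first answer `0` and
second query `k` equals `0` with probability 1, regardless of the second
answer; and (2) `C_{j₀}|_{x_i=1} ≡ 1`, i.e. `C_{j₀}(x) = x_i` for all `x`. -/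
theorem stmt_11 {n m : ℕ} (C : (Fin n → Bool) → Fin m → Bool) (i : Fin n)
    (D1 : Fin m → ℝ) (D2 : Fin m → Bool → Fin m → ℝ)
    (X : Fin m → Bool → Fin m → Bool → Option Bool → ℝ)
    (hD1 : ∀ j, 0 ≤ D1 j) (hD2 : ∀ j b k, 0 ≤ D2 j b k)
    (hX : ∀ j b k b' o, 0 ≤ X j b k b' o)
    (hXsum : ∀ j b k b', ∑ o : Option Bool, X j b k b' o = 1)
    -- perfect completeness for coordinate i
    (hpc : ∀ (x : Fin n → Bool) (j : Fin m), 0 < D1 j →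
      ∀ k : Fin m, 0 < D2 j (C x j) k →
      ∀ o : Option Bool, 0 < X j (C x j) k (C x k) o → o = some (x i))
    (j₀ : Fin m) (hj₀ : 0 < D1 j₀)
    -- C_{j₀} restricted to x_i = 0 is the constant-zero function
    (hj₀0 : ∀ x : Fin n → Bool, x i = false → C x j₀ = false)
    (k : Fin m) (hk : 0 < D2 j₀ false k)
    -- C_k restricted to x_i = 0 is not constant
    (hknc : ¬ ∃ c : Bool, ∀ x : Fin n → Bool, x i = false → C x k = c) :
    (X j₀ false k false (some false) = 1 ∧ X j₀ false k true (some false) = 1)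
    ∧ (∀ x : Fin n → Bool, C x j₀ = x i) := by
  -- From non-constancy get witnesses with both values of C x k
  push_neg at hknc
  obtain ⟨x0, hx0i, hx0k⟩ := hknc false
  obtain ⟨x1, hx1i, hx1k⟩ := hknc true
  simp only [ne_eq, Bool.not_eq_false] at hx0k
  simp only [ne_eq, Bool.not_eq_true] at hx1k
  -- key lemma: for each b', X j₀ false k b' (some false) = 1
  have key : ∀ b' : Bool, X j₀ false k b' (some false) = 1 := by
    intro b'
    obtain ⟨x, hxi, hxk⟩ : ∃ x : Fin n → Bool, x i = false ∧ C x k = b' := by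
      cases b'
      · exact ⟨x1, hx1i, hx1k⟩
      · exact ⟨x0, hx0i, hx0k⟩
    have hj : C x j₀ = false := hj₀0 x hxi
    have hzero : ∀ o : Option Bool, o ≠ some false → X j₀ false k b' o = 0 := by
      intro o ho
      by_contra hne
      have hpos : 0 < X j₀ false k b' o := lt_of_le_of_ne (hX _ _ _ _ _) (Ne.symm hne)
      have := hpc x j₀ hj₀ k (by rwa [hj]) o (by rwa [hj, hxk])
      rw [hxi] at this
      exact ho this
    have hsum := hXsum j₀ false k b'
    rw [Fintype.sum_option, Fintype.sum_bool] at hsum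
    rw [hzero none (by simp), hzero (some true) (by simp)] at hsum
    linarith
  refine ⟨⟨key false, key true⟩, ?_⟩
  intro x
  cases hxi : x i with
  | false => exact hj₀0 x hxi
  | true =>
    by_contra hne
    rw [Bool.not_eq_true] at hne
    have hpos : (0:ℝ) < X j₀ false k (C x k) (some false) := by
      rw [key (C x k)]; norm_num
    have := hpc x j₀ hj₀ k (by rwa [hne]) (some false) (by rwa [hne])
    rw [hxi] at this
    simp at this
end

section
/- Let C : {0,1}^n → {0,1}^m be a code with a randomized 2-query non-adaptive decoder Dec having perfect completeness, and fix i ∈ [n]. Let S_i be the set of codeword coordinates fixable by x_i. Suppose that every possible query pair {j,k} of Dec(i,·) intersects S_i (no pair avoids S_i entirely), and suppose the structural properties hold: (b) any decoding function that can output ⊥ is only used on pairs fully inside S_i, and (c) for pairs {j,k} with j ∈ S_i, k ∉ S_i, the (⊥-free) decoding function's output does not depend on the answer at k. Then for any x ∈ {0,1}^n there exists z ∈ {0,1}^m with HAM(C(x), z) ≤ |S_i| such that Pr[Dec(i,z) ∈ {x_i, ⊥}] = 0. -/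
/-- Let `Dec` be a non-adaptive randomized 2-query decoder for
coordinate `i` of `C` (probability space `(Ω, w)`, queries `qj ω, qk ω`,
decoding function `f ω : {0,1}² → {0,1,⊥}`, `none` playing `⊥`) with perfect
completeness.  Let `S` be the set of coordinates fixable by `x_i`.  Suppose
every possible query pair intersects `S`, and the structural properties hold:
(b) a decoding function that can output `⊥` is only used on pairs fully inside
`S`; (c) on a mixed pair the (`⊥`-free) decoding function does not depend on
the answer outside `S`.  Then for every `x` there is `z` with
`HAM(C(x), z) ≤ |S|` such that `Pr[Dec(i,z) ∈ {x_i, ⊥}] = 0`. -/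
theorem stmt_15 {n m : ℕ} (C : (Fin n → Bool) → Fin m → Bool) (i : Fin n)
    {Ω : Type*} [Fintype Ω] [DecidableEq Ω]
    (w : Ω → ℝ) (hw : ∀ ω, 0 ≤ w ω) (hw1 : ∑ ω, w ω = 1)
    (qj qk : Ω → Fin m) (f : Ω → Bool → Bool → Option Bool)
    -- perfect completeness for coordinate i
    (hpc : ∀ (x : Fin n → Bool) (ω : Ω), 0 < w ω →
      f ω (C x (qj ω)) (C x (qk ω)) = some (x i))
    -- S is the set of coordinates fixable by x_i
    (S : Finset (Fin m))
    (hS : ∀ j : Fin m, j ∈ S ↔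
      ((∃ c : Bool, ∀ x : Fin n → Bool, x i = false → C x j = c) ∨
       (∃ c : Bool, ∀ x : Fin n → Bool, x i = true → C x j = c)))
    -- every possible query pair intersects S
    (hint : ∀ ω : Ω, 0 < w ω → qj ω ∈ S ∨ qk ω ∈ S)
    -- (b)
    (hb : ∀ ω : Ω, 0 < w ω → (∃ a a' : Bool, f ω a a' = none) →
      qj ω ∈ S ∧ qk ω ∈ S)
    -- (c)
    (hc : ∀ ω : Ω, 0 < w ω → (∀ a a' : Bool, f ω a a' ≠ none) →
      (qj ω ∈ S → qk ω ∉ S → ∀ a a' a'' : Bool, f ω a a' = f ω a a'') ∧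
      (qk ω ∈ S → qj ω ∉ S → ∀ a a' a'' : Bool, f ω a a'' = f ω a' a'')) :
    ∀ x : Fin n → Bool, ∃ z : Fin m → Bool,
      hammingDist (C x) z ≤ S.card ∧
      (∑ ω ∈ Finset.univ.filter (fun ω =>
          f ω (z (qj ω)) (z (qk ω)) = some (x i) ∨
          f ω (z (qj ω)) (z (qk ω)) = none), w ω) = 0 := by
  intro x
  set y : Fin n → Bool := Function.update x i (!(x i)) with hy
  have hyi : y i = !(x i) := by simp [hy]
  refine ⟨fun j => if j ∈ S then C y j else C x j, ?_, ?_⟩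
  · refine le_trans (Finset.card_le_card ?_) le_rfl
    intro j hj
    simp only [hammingDist, Finset.mem_filter, Finset.mem_univ, true_and] at hj
    by_contra hjs
    simp [hjs] at hj
  · apply Finset.sum_eq_zero
    intro ω hω
    by_contra hwω
    have hpos : 0 < w ω := lt_of_le_of_ne (hw ω) (Ne.symm hwω)
    -- compute the decoder output
    have key : f ω ((if qj ω ∈ S then C y (qj ω) else C x (qj ω)))
        ((if qk ω ∈ S then C y (qk ω) else C x (qk ω))) = some (y i) := by
      rcases hint ω hpos with hj | hk
      · by_cases hk : qk ω ∈ S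
        · simp only [if_pos hj, if_pos hk]
          exact hpc y ω hpos
        · have hfree : ∀ a a' : Bool, f ω a a' ≠ none := by
            intro a a' hnone
            exact hk ((hb ω hpos ⟨a, a', hnone⟩).2)
          have := (hc ω hpos hfree).1 hj hk
          simp only [if_pos hj, if_neg hk]
          rw [this (C y (qj ω)) (C x (qk ω)) (C y (qk ω))]
          exact hpc y ω hpos
      · by_cases hj : qj ω ∈ S
        · simp only [if_pos hj, if_pos hk]
          exact hpc y ω hpos
        · have hfree : ∀ a a' : Bool, f ω a a' ≠ none := by
            intro a a' hnone
            exact hj ((hb ω hpos ⟨a, a', hnone⟩).1)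
          have := (hc ω hpos hfree).2 hk hj
          simp only [if_pos hk, if_neg hj]
          rw [← this (C y (qj ω)) (C x (qj ω)) (C y (qk ω))]
          exact hpc y ω hpos
    simp only [Finset.mem_filter, Finset.mem_univ, true_and] at hω
    rcases hω with h1 | h2
    · rw [key] at h1
      simp [hyi] at h1
    · rw [key] at h2
      simp at h2
end
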